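/- (Schur product theorem) If A and B are n×n real positive semidefinite matrices, then their Hadamard (entrywise) product A ∘ B, with entries (A∘B)ᵢⱼ = Aᵢⱼ Bᵢⱼ, is positive semidefinite. -/

import Mathlib

/-- Schur product theorem: the Hadamard (entrywise) product of two real
positive semidefinite matrices is positive semidefinite. -/
theorem schur_product_theorem {n : ℕ} (A B : Matrix (Fin n) (Fin n) ℝ)
    (hA : A.PosSemidef) (hB : B.PosSemidef) :
    (Matrix.of fun i j => A i j * B i j).PosSemidef := by
  obtain ⟨C, rfl⟩ : ∃ C : Matrix (Fin n) (Fin n) ℝ, A = C.conjTranspose * C := by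
    open scoped MatrixOrder Matrix.Norms.L2Operator in
    exact CStarAlgebra.nonneg_iff_eq_star_mul_self.mp hA.nonneg
  have hM : (C.conjTranspose * C).IsHermitian :=
    (Matrix.posSemidef_conjTranspose_mul_self C).1
  refine Matrix.PosSemidef.of_dotProduct_mulVec_nonneg ?_ ?_
  · ext i j
    have h1 := congrFun (congrFun hM i) j
    have h2 := congrFun (congrFun hB.1 i) j
    simp only [Matrix.conjTranspose_apply, star_trivial, Matrix.of_apply] at h1 h2 ⊢
    rw [h1, h2]
  · intro x
    have key : ∀ i j, (C.conjTranspose * C) i j = ∑ k, C k i * C k j := by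
      intro i j; simp [Matrix.mul_apply, Matrix.conjTranspose_apply]
    have heq : dotProduct (star x)
          ((Matrix.of fun i j => (C.conjTranspose * C) i j * B i j).mulVec x)
        = ∑ k, dotProduct (star fun i => x i * C k i)
            (B.mulVec fun i => x i * C k i) := by
      simp only [dotProduct, Matrix.mulVec, Matrix.of_apply, key, star_trivial,
        Finset.sum_mul, Finset.mul_sum]
      conv_lhs => enter [2, i]; rw [Finset.sum_comm]
      rw [Finset.sum_comm]
      congr 1; ext k; congr 1; ext i; congr 1; ext j
      ring
    rw [heq]
    exact Finset.sum_nonneg fun k _ => hB.dotProduct_mulVec_nonneg _
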